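/- For the triangle Δ = conv{(0,0), (1, 2/3), (3, 0)}, the generating function Σ_{n≥0} |(n/3)Δ ∩ ℤ²| t^n equals (1 + t^5)/((1-t)^2 (1-t^9)). -/

import Mathlib

open Pointwise

open PowerSeries


private def dd (n : ℕ) : ℤ := ((2 * n / 9 : ℕ) : ℤ) + 1
private def ff (n : ℕ) : ℤ := ∑ k ∈ Finset.range (n + 1), dd k

private lemma ff_succ (n : ℕ) : ff (n + 1) = ff n + dd (n + 1) := Finset.sum_range_succ _ _


private noncomputable def TT' (n : ℕ) : Finset (ℤ × ℤ) :=
  (Finset.Icc ((0 : ℤ), (0 : ℤ)) ((n : ℤ), (n : ℤ))).filter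
    (fun p => 3 * p.2 ≤ 2 * p.1 ∧ p.1 + 3 * p.2 ≤ (n : ℤ))

private lemma mem_TT' {n : ℕ} {p : ℤ × ℤ} :
    p ∈ TT' n ↔ 0 ≤ p.2 ∧ 3 * p.2 ≤ 2 * p.1 ∧ p.1 + 3 * p.2 ≤ (n : ℤ) := by
  simp only [TT', Finset.mem_filter, Finset.mem_Icc, Prod.le_def]
  omega

private lemma ncard_eq (n : ℕ) :
    ({x : Fin 2 → ℤ | 0 ≤ x 1 ∧ 3 * x 1 ≤ 2 * x 0 ∧ x 0 + 3 * x 1 ≤ (n : ℤ)}).ncard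
      = (TT' n).card := by
  have himg : ({x : Fin 2 → ℤ | 0 ≤ x 1 ∧ 3 * x 1 ≤ 2 * x 0 ∧ x 0 + 3 * x 1 ≤ (n : ℤ)})
      = (fun p : ℤ × ℤ => ![p.1, p.2]) '' ↑(TT' n) := by
    ext x
    simp only [Set.mem_setOf_eq, Set.mem_image, Finset.mem_coe, mem_TT']
    constructor
    · rintro ⟨h1, h2, h3⟩
      refine ⟨(x 0, x 1), ⟨h1, h2, h3⟩, ?_⟩
      funext j; fin_cases j <;> rfl
    · rintro ⟨p, hp, rfl⟩
      simpa using hp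
  have hinj : Function.Injective (fun p : ℤ × ℤ => (![p.1, p.2] : Fin 2 → ℤ)) := by
    rintro ⟨a, b⟩ ⟨c, d⟩ h
    have h0 := congrFun h 0
    have h1 := congrFun h 1
    simp at h0 h1
    simp [h0, h1]
  rw [himg, Set.ncard_image_of_injective _ hinj, Set.ncard_coe_finset]

private lemma card_TT' (n : ℕ) : ((TT' n).card : ℤ) = ff n := by
  induction n with
  | zero =>
    have h : TT' 0 = {((0 : ℤ), (0 : ℤ))} := by
      ext p; simp [mem_TT', Prod.ext_iff]; omega
    simp [h, ff, dd]
  | succ n ih =>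
    have hTT' : TT' (n + 1) = TT' n ∪
        (Finset.Icc (0 : ℤ) ((2 * ((n : ℤ) + 1)) / 9)).image
          (fun y => ((n : ℤ) + 1 - 3 * y, y)) := by
      ext ⟨a, b⟩
      simp only [mem_TT', Finset.mem_union, Finset.mem_image, Finset.mem_Icc, Prod.mk.injEq,
        Nat.cast_add, Nat.cast_one]
      constructor
      · rintro ⟨hb, h1, h2⟩
        by_cases h : a + 3 * b ≤ (n : ℤ)
        · exact Or.inl ⟨hb, h1, h⟩
        · exact Or.inr ⟨b, by omega, by omega, rfl⟩
      · rintro (⟨hb, h1, h2⟩ | ⟨y, ⟨hy0, hyD⟩, hy1, hy2⟩) <;> omega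
    have hdisj : Disjoint (TT' n)
        ((Finset.Icc (0 : ℤ) ((2 * ((n : ℤ) + 1)) / 9)).image
          (fun y => ((n : ℤ) + 1 - 3 * y, y))) := by
      rw [Finset.disjoint_left]
      rintro ⟨a, b⟩ hp hq
      rw [mem_TT'] at hp
      simp only [Finset.mem_image, Finset.mem_Icc, Prod.mk.injEq] at hq
      obtain ⟨y, _, hy1, hy2⟩ := hq
      omega
    have hinj : Function.Injective (fun y : ℤ => ((n : ℤ) + 1 - 3 * y, y)) := by
      intro a b h; simpa using congrArg Prod.snd h
    rw [hTT', Finset.card_union_of_disjoint hdisj, Finset.card_image_of_injective _ hinj,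
      Int.card_Icc]
    have hval : ff (n + 1) = ff n + dd (n + 1) := Finset.sum_range_succ _ _
    push_cast [hval, dd]
    omega

private lemma ps_main :
    (1 - (X : ℤ⟦X⟧)) ^ 2 * (1 - X ^ 9) * PowerSeries.mk (fun n => ff n) = 1 + X ^ 5 := by
  set A : ℤ⟦X⟧ := PowerSeries.mk (fun n => ff n) with hA
  have expand : (1 - (X : ℤ⟦X⟧)) ^ 2 * (1 - X ^ 9) * A =
      A - X ^ 1 * A - X ^ 1 * A + X ^ 2 * A - X ^ 9 * A + X ^ 10 * A + X ^ 10 * A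
        - X ^ 11 * A := by ring
  rw [expand]
  ext n
  simp only [map_sub, map_add, coeff_X_pow_mul', hA, coeff_mk, PowerSeries.coeff_one,
    PowerSeries.coeff_X_pow]
  by_cases h : n < 11
  · interval_cases n <;> simp [ff, dd, Finset.sum_range_succ] 
  · push_neg at h
    obtain ⟨m, rfl⟩ : ∃ m, n = m + 11 := ⟨n - 11, by omega⟩
    have e1 : ff (m + 11) = ff (m + 10) + dd (m + 11) := ff_succ _
    have e2 : ff (m + 10) = ff (m + 9) + dd (m + 10) := ff_succ _
    have e3 : ff (m + 2) = ff (m + 1) + dd (m + 2) := ff_succ _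
    have e4 : ff (m + 1) = ff m + dd (m + 1) := ff_succ _
    have h1 : (1 : ℕ) ≤ m + 11 := by omega
    have h2 : (2 : ℕ) ≤ m + 11 := by omega
    have h9 : (9 : ℕ) ≤ m + 11 := by omega
    have h10 : (10 : ℕ) ≤ m + 11 := by omega
    have h11 : (11 : ℕ) ≤ m + 11 := by omega
    rw [if_pos h1, if_pos h2, if_pos h9, if_pos h10, if_pos h11, if_neg (by omega),
      if_neg (by omega)]
    have r1 : m + 11 - 1 = m + 10 := by omega
    have r2 : m + 11 - 2 = m + 9 := by omega
    have r9 : m + 11 - 9 = m + 2 := by omega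
    have r10 : m + 11 - 10 = m + 1 := by omega
    have r11 : m + 11 - 11 = m := by omega
    rw [r1, r2, r9, r10, r11, e1, e2, e3, e4]
    have h1 : (2 * (m + 11) / 9 : ℕ) = 2 * (m + 2) / 9 + 2 := by omega
    have h2 : (2 * (m + 10) / 9 : ℕ) = 2 * (m + 1) / 9 + 2 := by omega
    simp only [dd, h1, h2]
    push_cast
    ring


private lemma triangle_mem (n : ℕ) (x : Fin 2 → ℤ) :
    ((fun j => ((x j : ℤ) : ℝ)) ∈
        ((n : ℝ) / 3) • convexHull ℝ
          ({![0, 0], ![1, 2 / 3], ![3, 0]} : Set (Fin 2 → ℝ))) ↔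
      (0 ≤ x 1 ∧ 3 * x 1 ≤ 2 * x 0 ∧ x 0 + 3 * x 1 ≤ (n : ℤ)) := by
  constructor
  · rintro ⟨q, hq, hsmul⟩
    -- hull ⊆ halfspace description
    have hC : convexHull ℝ ({![0, 0], ![1, 2 / 3], ![3, 0]} : Set (Fin 2 → ℝ)) ⊆
        {q : Fin 2 → ℝ | 0 ≤ q 1 ∧ 3 * q 1 ≤ 2 * q 0 ∧ q 0 + 3 * q 1 ≤ 3} := by
      apply convexHull_min
      · rintro v (rfl | rfl | rfl) <;> norm_num
      · have h1 : Convex ℝ {q : Fin 2 → ℝ | 0 ≤ q 1} :=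
          convex_halfSpace_ge ⟨fun a b => rfl, fun c a => rfl⟩ 0
        have h2 : Convex ℝ {q : Fin 2 → ℝ | 3 * q 1 - 2 * q 0 ≤ 0} :=
          convex_halfSpace_le ⟨fun a b => by simp; ring, fun c a => by simp; ring⟩ 0
        have h3 : Convex ℝ {q : Fin 2 → ℝ | q 0 + 3 * q 1 ≤ 3} :=
          convex_halfSpace_le ⟨fun a b => by simp; ring, fun c a => by simp; ring⟩ 3
        have : {q : Fin 2 → ℝ | 0 ≤ q 1 ∧ 3 * q 1 ≤ 2 * q 0 ∧ q 0 + 3 * q 1 ≤ 3} =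
            {q : Fin 2 → ℝ | 0 ≤ q 1} ∩ ({q : Fin 2 → ℝ | 3 * q 1 - 2 * q 0 ≤ 0} ∩
              {q : Fin 2 → ℝ | q 0 + 3 * q 1 ≤ 3}) := by
          ext q; simp only [Set.mem_setOf_eq, Set.mem_inter_iff]; constructor <;>
            (rintro ⟨a, b, c⟩; exact ⟨a, by linarith, by linarith⟩)
        rw [this]
        exact h1.inter (h2.inter h3)
    obtain ⟨hq1, hq2, hq3⟩ := hC hq
    have h0 := congrFun hsmul 0
    have h1 := congrFun hsmul 1
    simp only [Pi.smul_apply, smul_eq_mul] at h0 h1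
    have hn : (0 : ℝ) ≤ (n : ℝ) / 3 := by positivity
    have e0 : (x 0 : ℝ) = (n : ℝ) / 3 * q 0 := h0.symm
    have e1 : (x 1 : ℝ) = (n : ℝ) / 3 * q 1 := h1.symm
    refine ⟨?_, ?_, ?_⟩
    · have : (0 : ℝ) ≤ (x 1 : ℝ) := by rw [e1]; positivity
      exact_mod_cast this
    · have : 3 * (x 1 : ℝ) ≤ 2 * (x 0 : ℝ) := by
        rw [e0, e1]; nlinarith
      exact_mod_cast this
    · have : (x 0 : ℝ) + 3 * (x 1 : ℝ) ≤ (n : ℝ) := by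
        rw [e0, e1]; nlinarith
      exact_mod_cast this
  · rintro ⟨h1, h2, h3⟩
    rcases Nat.eq_zero_or_pos n with rfl | hn
    · have hx0 : x 0 = 0 := by omega
      have hx1 : x 1 = 0 := by omega
      have hne : ({![0, 0], ![1, 2 / 3], ![3, 0]} : Set (Fin 2 → ℝ)).Nonempty :=
        ⟨![0, 0], by simp⟩
      rw [show ((0 : ℕ) : ℝ) / 3 = 0 by norm_num, Set.zero_smul_set (hne.mono
        (subset_convexHull ℝ _))]
      refine Set.mem_singleton_iff.2 ?_
      funext j; fin_cases j <;> simp [hx0, hx1]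
    · have hn' : (0 : ℝ) < (n : ℝ) := by exact_mod_cast hn
      set w : Fin 3 → ℝ := ![((n : ℝ) - x 0 - 3 * x 1) / n, 9 * (x 1 : ℝ) / (2 * n),
        (2 * (x 0 : ℝ) - 3 * x 1) / (2 * n)] with hw
      set z : Fin 3 → Fin 2 → ℝ := ![![0, 0], ![1, 2 / 3], ![3, 0]] with hz
      have hx1' : (0 : ℝ) ≤ (x 1 : ℝ) := by exact_mod_cast h1
      have hx2' : 3 * (x 1 : ℝ) ≤ 2 * (x 0 : ℝ) := by exact_mod_cast h2
      have hx3' : (x 0 : ℝ) + 3 * (x 1 : ℝ) ≤ (n : ℝ) := by exact_mod_cast h3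
      have hw0 : ∀ i ∈ Finset.univ, 0 ≤ w i := by
        intro i _; fin_cases i <;> simp only [hw, Matrix.cons_val_zero, Matrix.cons_val_one,
          Matrix.head_cons, Matrix.cons_val_two, Matrix.tail_cons] <;>
          apply div_nonneg <;> linarith
      have hws : ∑ i, w i = 1 := by
        simp only [hw, Fin.sum_univ_three, Matrix.cons_val_zero, Matrix.cons_val_one,
          Matrix.head_cons, Matrix.cons_val_two, Matrix.tail_cons]
        field_simp
        ring
      have hmem : Finset.univ.centerMass w z ∈
          convexHull ℝ ({![0, 0], ![1, 2 / 3], ![3, 0]} : Set (Fin 2 → ℝ)) := by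
        apply Finset.centerMass_mem_convexHull
        · exact hw0
        · rw [hws]; norm_num
        · intro i _; fin_cases i <;> simp [hz]
      refine ⟨Finset.univ.centerMass w z, hmem, ?_⟩
      rw [Finset.centerMass_eq_of_sum_1 _ _ hws]
      funext j
      have hj : j = 0 ∨ j = 1 := by omega
      simp only [Fin.sum_univ_three, Pi.smul_apply, Pi.add_apply, smul_eq_mul]
      rcases hj with rfl | rfl <;>
        simp only [hw, hz, Matrix.cons_val_zero, Matrix.cons_val_one, Matrix.head_cons,
          Matrix.cons_val_two, Matrix.tail_cons, Pi.add_apply, Pi.smul_apply, smul_eq_mul] <;>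
        field_simp <;> ring


/-- For the triangle `Δ = conv{(0,0),(1,2/3),(3,0)}`, the generating function
`Σₙ |(n/3)Δ ∩ ℤ²| tⁿ` equals `(1 + t⁵)/((1-t)²(1-t⁹))`. -/
theorem stmt14 :
    (1 - (X : ℤ⟦X⟧)) ^ 2 * (1 - X ^ 9) *
        PowerSeries.mk (fun n : ℕ =>
          (({x : Fin 2 → ℤ | (fun j => ((x j : ℤ) : ℝ)) ∈
              ((n : ℝ) / 3) • convexHull ℝ
                ({![0, 0], ![1, 2 / 3], ![3, 0]} : Set (Fin 2 → ℝ))}).ncard : ℤ)) =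
      1 + X ^ 5 := by
  have key : ∀ n : ℕ,
      (({x : Fin 2 → ℤ | (fun j => ((x j : ℤ) : ℝ)) ∈
          ((n : ℝ) / 3) • convexHull ℝ
            ({![0, 0], ![1, 2 / 3], ![3, 0]} : Set (Fin 2 → ℝ))}).ncard : ℤ) = ff n := by
    intro n
    have hset : {x : Fin 2 → ℤ | (fun j => ((x j : ℤ) : ℝ)) ∈
        ((n : ℝ) / 3) • convexHull ℝ
          ({![0, 0], ![1, 2 / 3], ![3, 0]} : Set (Fin 2 → ℝ))}
        = {x : Fin 2 → ℤ | 0 ≤ x 1 ∧ 3 * x 1 ≤ 2 * x 0 ∧ x 0 + 3 * x 1 ≤ (n : ℤ)} := by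
      ext x; exact triangle_mem n x
    rw [hset, ncard_eq, card_TT']
  have hmk : PowerSeries.mk (fun n : ℕ =>
      (({x : Fin 2 → ℤ | (fun j => ((x j : ℤ) : ℝ)) ∈
          ((n : ℝ) / 3) • convexHull ℝ
            ({![0, 0], ![1, 2 / 3], ![3, 0]} : Set (Fin 2 → ℝ))}).ncard : ℤ))
      = PowerSeries.mk (fun n => ff n) := by
    exact congrArg PowerSeries.mk (funext key)
  rw [hmk]
  exact ps_main
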